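/- Let H be a positive semidefinite n×n block matrix with k×k blocks. Then (det(tr₁H)/n^k)^n ≥ det H, where tr₁H = Σᵢ H_{i,i}. -/

import Mathlib

open Matrix BigOperators ComplexOrder

/-- First partial trace: sum of the diagonal blocks. -/
noncomputable def ptrace1 {n k : ℕ} (H : Matrix (Fin n × Fin k) (Fin n × Fin k) ℂ) :
    Matrix (Fin k) (Fin k) ℂ :=
  Matrix.of fun l m => ∑ i : Fin n, H (i, l) (i, m)

open Kronecker

section Helpers

variable {m : Type*} [Fintype m] [DecidableEq m]

lemma trace_eq_sum_eig {A : Matrix m m ℂ} (hA : A.IsHermitian) :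
    A.trace = ∑ i, (hA.eigenvalues i : ℂ) := by
  conv_lhs => rw [hA.spectral_theorem, Unitary.conjStarAlgAut_apply]
  rw [Matrix.trace_mul_cycle]
  rw [Unitary.coe_star_mul_self hA.eigenvectorUnitary, one_mul, Matrix.trace_diagonal]
  rfl

lemma det_eq_ofReal {A : Matrix m m ℂ} (hA : A.PosSemidef) :
    A.det = ((∏ i, hA.1.eigenvalues i : ℝ) : ℂ) := by
  rw [hA.1.det_eq_prod_eigenvalues]
  push_cast
  rfl

lemma det_re_nonneg {A : Matrix m m ℂ} (hA : A.PosSemidef) : 0 ≤ A.det.re := by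
  rw [det_eq_ofReal hA, Complex.ofReal_re]
  exact Finset.prod_nonneg fun i _ => hA.eigenvalues_nonneg i

lemma det_im_zero {A : Matrix m m ℂ} (hA : A.PosSemidef) : A.det.im = 0 := by
  rw [det_eq_ofReal hA, Complex.ofReal_im]

/-- AM-GM for PSD matrices: det ≤ (trace/dim)^dim. -/
lemma det_re_le_trace {A : Matrix m m ℂ} (hA : A.PosSemidef) (hm : 0 < Fintype.card m) :
    A.det.re ≤ (A.trace.re / (Fintype.card m)) ^ (Fintype.card m) := by
  set d := Fintype.card m with hd
  have hdet : A.det.re = ∏ i, hA.1.eigenvalues i := by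
    rw [det_eq_ofReal hA, Complex.ofReal_re]
  have htr : A.trace.re = ∑ i, hA.1.eigenvalues i := by
    rw [trace_eq_sum_eig hA.1]
    simp
  have hev : ∀ i, 0 ≤ hA.1.eigenvalues i := fun i => hA.eigenvalues_nonneg i
  have amgm := Real.geom_mean_le_arith_mean_weighted Finset.univ
    (fun _ => (d : ℝ)⁻¹) hA.1.eigenvalues
    (fun i _ => by positivity) (by simp [Finset.card_univ, hd]; exact div_self (Nat.cast_ne_zero.mpr hm.ne'))
    (fun i _ => hev i)
  have key : ∏ i, hA.1.eigenvalues i ≤ ((∑ i, hA.1.eigenvalues i) / d) ^ d := by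
    have h1 : ∏ i, hA.1.eigenvalues i = (∏ i, hA.1.eigenvalues i ^ ((d:ℝ)⁻¹)) ^ d := by
      rw [← Finset.prod_pow]
      refine Finset.prod_congr rfl fun i _ => ?_
      rw [Real.rpow_inv_natCast_pow (hev i) hm.ne']
    rw [h1]
    apply pow_le_pow_left₀ (Finset.prod_nonneg fun i _ => Real.rpow_nonneg (hev i) _)
    calc ∏ i, hA.1.eigenvalues i ^ ((d:ℝ)⁻¹) ≤ ∑ i, (d:ℝ)⁻¹ * hA.1.eigenvalues i := amgm
      _ = (∑ i, hA.1.eigenvalues i) / d := by rw [← Finset.mul_sum]; ring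
  rw [hdet, htr]
  exact key

end Helpers

section PT
variable {n k : ℕ}

/-- The embedding matrix for block `i`. -/
def Emat (n k : ℕ) (i : Fin n) : Matrix (Fin n × Fin k) (Fin k) ℂ :=
  Matrix.of fun p m => if p = (i, m) then 1 else 0

lemma ptrace1_eq_sum (H : Matrix (Fin n × Fin k) (Fin n × Fin k) ℂ) :
    ptrace1 H = ∑ i : Fin n, (Emat n k i)ᴴ * H * (Emat n k i) := by
  ext l m
  simp only [ptrace1, Matrix.of_apply, Matrix.sum_apply, Matrix.mul_apply, Emat,
    conjTranspose_apply, Fintype.sum_prod_type, apply_ite star, star_one, star_zero,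
    ite_mul, one_mul, zero_mul, mul_ite, mul_one, mul_zero, Prod.ext_iff, ite_and]
  simp [Finset.sum_ite_eq, Finset.sum_ite_eq']

lemma ptrace1_posSemidef {H : Matrix (Fin n × Fin k) (Fin n × Fin k) ℂ}
    (hH : H.PosSemidef) : (ptrace1 H).PosSemidef := by
  rw [ptrace1_eq_sum]
  exact Finset.sum_induction _ _ (fun a b ha hb => ha.add hb) Matrix.PosSemidef.zero
    fun i _ => hH.conjTranspose_mul_mul_same _

lemma trace_eq_trace_ptrace1 (H : Matrix (Fin n × Fin k) (Fin n × Fin k) ℂ) :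
    H.trace = (ptrace1 H).trace := by
  simp only [Matrix.trace, Matrix.diag, ptrace1, Matrix.of_apply, Fintype.sum_prod_type]
  exact Finset.sum_comm

lemma ptrace1_conj (H : Matrix (Fin n × Fin k) (Fin n × Fin k) ℂ)
    (R : Matrix (Fin k) (Fin k) ℂ) :
    ptrace1 (((1 : Matrix (Fin n) (Fin n) ℂ) ⊗ₖ R)ᴴ * H * ((1 : Matrix (Fin n) (Fin n) ℂ) ⊗ₖ R))
      = Rᴴ * ptrace1 H * R := by
  ext l m
  simp only [ptrace1, Matrix.of_apply, Matrix.mul_apply, conjTranspose_apply,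
    kroneckerMap_apply, Fintype.sum_prod_type, Matrix.one_apply, star_mul', apply_ite star,
    star_one, star_zero, ite_mul, zero_mul, one_mul, mul_ite, mul_zero, mul_one,
    Finset.sum_ite_eq, Finset.sum_ite_eq', Finset.mem_univ, if_true]
  simp only [Finset.sum_ite_irrel, Finset.sum_const_zero, Finset.sum_ite_eq,
    Finset.sum_ite_eq', Finset.mem_univ, if_true, Finset.mul_sum, Finset.sum_mul]
  rw [Finset.sum_comm]
  refine Finset.sum_congr rfl fun c _ => ?_
  rw [Finset.sum_comm]

lemma dot_ptrace1 (H : Matrix (Fin n × Fin k) (Fin n × Fin k) ℂ) (x : Fin k → ℂ) :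
    star x ⬝ᵥ (ptrace1 H) *ᵥ x
      = ∑ i : Fin n, star ((Emat n k i) *ᵥ x) ⬝ᵥ H *ᵥ ((Emat n k i) *ᵥ x) := by
  simp only [ptrace1, dotProduct, Matrix.mulVec, Matrix.of_apply, Emat, Pi.star_apply,
    Fintype.sum_prod_type, Prod.mk.injEq, Prod.ext_iff, ite_and, apply_ite star,
    star_one, star_zero, dotProduct, ite_mul, zero_mul, one_mul, mul_ite, mul_zero, mul_one,
    Finset.sum_ite_irrel, Finset.sum_const_zero, Finset.sum_ite_eq, Finset.sum_ite_eq',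
    Finset.mem_univ, if_true, Finset.mul_sum, Finset.sum_mul]
  exact (Finset.sum_congr rfl fun a _ => Finset.sum_comm).trans Finset.sum_comm

end PT

/-- Strong Lin inequality: (det(tr₁H)/n^k)^n ≥ det H. -/
theorem stmt3 {n k : ℕ} (hn : 0 < n) (hk : 0 < k)
    (H : Matrix (Fin n × Fin k) (Fin n × Fin k) ℂ) (hH : H.PosSemidef) :
    ((ptrace1 H).det.re / (n : ℝ) ^ k) ^ n ≥ H.det.re := by
  classical
  have hT : (ptrace1 H).PosSemidef := ptrace1_posSemidef hH
  set T := ptrace1 H with hTdef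
  by_cases hTd : T.PosDef
  · -- positive definite case
    have htpos : 0 < T.det.re := (Complex.lt_def.mp hTd.det_pos).1
    set t := T.det.re with htdef
    have hTt : T.det = (t : ℂ) := Complex.ext rfl (det_im_zero hT)
    set S := (open scoped MatrixOrder in CFC.sqrt T) with hSdef
    have hS : S.PosSemidef := (open scoped MatrixOrder in (CFC.sqrt_nonneg T).posSemidef)
    have hSS : S * S = T := (open scoped MatrixOrder in CFC.sqrt_mul_sqrt_self T hT.nonneg)
    set s := S.det.re with hsdef
    have hSs : S.det = (s : ℂ) := Complex.ext rfl (det_im_zero hS)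
    have hs0 : 0 ≤ s := det_re_nonneg hS
    have hst : s * s = t := by
      have : S.det * S.det = T.det := by rw [← Matrix.det_mul, hSS]
      rw [hSs, hTt] at this
      exact_mod_cast this
    have hspos : 0 < s := by
      rcases hs0.lt_or_eq with h | h
      · exact h
      · exfalso; rw [← h] at hst; simp at hst; rw [← hst] at htpos; simp at htpos
    have hSunit : IsUnit S.det := by
      rw [hSs]
      exact (IsUnit.mk0 _ (by exact_mod_cast hspos.ne'))
    set R := S⁻¹ with hRdef
    have hRH : Rᴴ = R := by rw [hRdef, Matrix.conjTranspose_nonsing_inv, hS.1]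
    have hRTR : Rᴴ * T * R = 1 := by
      rw [hRH, hRdef, ← hSS, ← Matrix.mul_assoc, Matrix.nonsing_inv_mul _ hSunit, one_mul,
        Matrix.mul_nonsing_inv _ hSunit]
    set B := (1 : Matrix (Fin n) (Fin n) ℂ) ⊗ₖ R with hBdef
    set H' := Bᴴ * H * B with hH'def
    have hH' : H'.PosSemidef := hH.conjTranspose_mul_mul_same B
    have hpt : ptrace1 H' = 1 := by rw [hH'def, hBdef, ptrace1_conj, ← hTdef, hRTR]
    have htr : H'.trace.re = (k : ℝ) := by
      rw [trace_eq_trace_ptrace1, hpt, Matrix.trace_one]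
      simp
    have hcard : Fintype.card (Fin n × Fin k) = n * k := by simp
    have amgm := det_re_le_trace hH' (by rw [hcard]; positivity)
    rw [htr, hcard] at amgm
    -- determinant relations
    have hdetB : B.det = ((s⁻¹ : ℝ) : ℂ) ^ n := by
      rw [hBdef, Matrix.det_kronecker, Matrix.det_one, one_pow, one_mul, hRdef,
        Matrix.det_nonsing_inv, Ring.inverse_eq_inv', hSs, Fintype.card_fin]
      push_cast
      ring
    set h0 := H.det.re with h0def
    have hH0 : H.det = (h0 : ℂ) := Complex.ext rfl (det_im_zero hH)
    have hdetH' : H'.det.re = (s⁻¹) ^ n * (s⁻¹) ^ n * h0 := by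
      rw [hH'def, Matrix.det_mul, Matrix.det_mul, Matrix.det_conjTranspose, hdetB, hH0]
      have : (star (((s⁻¹ : ℝ) : ℂ) ^ n)) = ((s⁻¹ : ℝ) : ℂ) ^ n := by
        rw [star_pow, Complex.star_def, Complex.conj_ofReal]
      rw [this]
      push_cast
      rw [show ((s⁻¹:ℂ)^n * ((h0:ℂ)) * (s⁻¹:ℂ)^n) = (((s⁻¹^n*s⁻¹^n*h0 : ℝ)) : ℂ) by push_cast; ring]
      rw [Complex.ofReal_re]
    rw [hdetH'] at amgm
    -- final arithmetic
    have hn' : (0:ℝ) < n := by exact_mod_cast hn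
    have hk' : (0:ℝ) < k := by exact_mod_cast hk
    have hfrac : ((k : ℝ)) / ((n * k : ℕ) : ℝ) = 1 / n := by
      push_cast
      field_simp
    rw [hfrac] at amgm
    have hkey : h0 ≤ ((s * s) / (n:ℝ)^k) ^ n := by
      have h1 : h0 = (s*s)^n * ((s⁻¹) ^ n * (s⁻¹) ^ n * h0) := by
        rw [show (s*s)^n * ((s⁻¹) ^ n * (s⁻¹) ^ n * h0) = ((s*s⁻¹)^n*(s*s⁻¹)^n) * h0 by ring, mul_inv_cancel₀ hspos.ne']
        ring
      rw [h1]
      calc (s*s)^n * ((s⁻¹) ^ n * (s⁻¹) ^ n * h0)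
          ≤ (s*s)^n * ((1 / (n:ℝ)) ^ (n*k)) := by
            apply mul_le_mul_of_nonneg_left amgm (by positivity)
        _ = ((s * s) / (n:ℝ)^k) ^ n := by
            rw [div_pow, mul_comm n k, pow_mul, div_pow, one_pow]
            ring
    rw [ge_iff_le, ← hst]
    exact hkey
  · -- singular case: det H = 0
    obtain ⟨x, hx0, hxle⟩ : ∃ x : Fin k → ℂ, x ≠ 0 ∧ ¬ 0 < star x ⬝ᵥ T *ᵥ x := by
      by_contra hc
      push_neg at hc
      exact hTd (posDef_iff_dotProduct_mulVec.mpr ⟨hT.1, fun x hx => hc x hx⟩)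
    have hx : star x ⬝ᵥ T *ᵥ x = 0 := by
      rcases (hT.dotProduct_mulVec_nonneg x).lt_or_eq with h | h
      · exact absurd h hxle
      · exact h.symm
    have hsum := dot_ptrace1 H x
    rw [← hTdef, hx] at hsum
    have hterm0 : ∀ i ∈ Finset.univ, star ((Emat n k i) *ᵥ x) ⬝ᵥ H *ᵥ ((Emat n k i) *ᵥ x) = 0 :=
      (Finset.sum_eq_zero_iff_of_nonneg (fun i _ => hH.dotProduct_mulVec_nonneg _)).mp hsum.symm
    obtain ⟨l, hl⟩ := Function.ne_iff.mp hx0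
    set i0 : Fin n := ⟨0, hn⟩ with hi0
    have hw0 : (Emat n k i0) *ᵥ x ≠ 0 := by
      intro hcon
      apply hl
      have := congr_fun hcon (i0, l)
      simpa [Matrix.mulVec, Emat, dotProduct, Prod.ext_iff, ite_and] using this
    have hker : H *ᵥ ((Emat n k i0) *ᵥ x) = 0 :=
      (hH.dotProduct_mulVec_zero_iff _).mp (hterm0 i0 (Finset.mem_univ _))
    have hdetH : H.det = 0 := (Matrix.exists_mulVec_eq_zero_iff).mp ⟨_, hw0, hker⟩
    rw [hdetH]
    simp only [Complex.zero_re, ge_iff_le]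
    have h1 := det_re_nonneg hT
    positivity
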